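/- Let E be a real normed vector space, K ≥ 1, and let g₀, g₁, …, g_K : E → ℝ be differentiable at θ ∈ E. Then the Fréchet derivative at θ of the FlatNCE loss L(θ') = log( Σ_{j=1}^K exp(g_j(θ') − g₀(θ')) ) is the self-normalized importance-weighted combination D L(θ) = Σ_{j=1}^K w_j · D g_j(θ) − D g₀(θ), where w_j = exp(g_j(θ)) / ( Σ_{j'=1}^K exp(g_{j'}(θ)) ) are the softmax weights over the negative logits. -/

import Mathlib

open Real

/-- **The FlatNCE gradient is a self-normalized importance-weighted estimator.**
Let `g₀ : E → ℝ` be the positive logit and `g₁, …, g_K : E → ℝ` the negative logits, all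
differentiable at `θ`.  The Fréchet derivative at `θ` of the FlatNCE loss
`L(θ') = log ( Σ_{j=1}^K exp(g_j(θ') − g₀(θ')) )` is
`Σ_{j=1}^K w_j • D g_j(θ) − D g₀(θ)` with softmax weights
`w_j = exp(g_j(θ)) / Σ_{j'} exp(g_{j'}(θ))`. -/
theorem flatNCE_fderiv_importance_weighted {E : Type*} [NormedAddCommGroup E]
    [NormedSpace ℝ E] (K : ℕ) (hK : 1 ≤ K) (g₀ : E → ℝ) (g : Fin K → E → ℝ) (θ : E)
    (hg₀ : DifferentiableAt ℝ g₀ θ) (hg : ∀ j, DifferentiableAt ℝ (g j) θ)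
    (w : Fin K → ℝ)
    (hw : ∀ j, w j = Real.exp (g j θ) / ∑ j', Real.exp (g j' θ)) :
    fderiv ℝ (fun θ' => Real.log (∑ j, Real.exp (g j θ' - g₀ θ'))) θ
      = (∑ j, w j • fderiv ℝ (g j) θ) - fderiv ℝ g₀ θ := by
  have hne : (Finset.univ : Finset (Fin K)).Nonempty := ⟨⟨0, hK⟩, Finset.mem_univ _⟩
  have hTpos : (0:ℝ) < ∑ j, Real.exp (g j θ) :=
    Finset.sum_pos (fun j _ => Real.exp_pos _) hne
  have hSpos : (0:ℝ) < ∑ j, Real.exp (g j θ - g₀ θ) :=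
    Finset.sum_pos (fun j _ => Real.exp_pos _) hne
  have hS : HasFDerivAt (fun θ' => ∑ j, Real.exp (g j θ' - g₀ θ'))
      (∑ j, Real.exp (g j θ - g₀ θ) • (fderiv ℝ (g j) θ - fderiv ℝ g₀ θ)) θ := by
    apply HasFDerivAt.fun_sum
    intro j _
    exact ((hg j).hasFDerivAt.sub hg₀.hasFDerivAt).exp
  have hL := hS.log (ne_of_gt hSpos)
  rw [hL.fderiv]
  rw [Finset.smul_sum]
  have hw1 : ∑ j, w j = 1 := by
    rw [Finset.sum_congr rfl (fun j _ => hw j), ← Finset.sum_div,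
      div_self (ne_of_gt hTpos)]
  have key : ∀ j : Fin K,
      (∑ i, Real.exp (g i θ - g₀ θ))⁻¹ • (Real.exp (g j θ - g₀ θ) •
        (fderiv ℝ (g j) θ - fderiv ℝ g₀ θ))
      = w j • fderiv ℝ (g j) θ - w j • fderiv ℝ g₀ θ := by
    intro j
    have hT0 : ∑ i, Real.exp (g i θ - g₀ θ)
        = (∑ i, Real.exp (g i θ)) / Real.exp (g₀ θ) := by
      rw [Finset.sum_div]
      exact Finset.sum_congr rfl (fun i _ => by rw [Real.exp_sub])
    have hc : (∑ i, Real.exp (g i θ - g₀ θ))⁻¹ * Real.exp (g j θ - g₀ θ) = w j := by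
      rw [hT0, hw j, Real.exp_sub]
      field_simp
    rw [smul_smul, hc, smul_sub]
  rw [Finset.sum_congr rfl (fun j _ => key j), Finset.sum_sub_distrib,
    ← Finset.sum_smul, hw1, one_smul]
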